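/- With ω as above on ℂ³ (for a ∈ ℝ), and for {i,j,k} = {1,2,3}, the restriction of ω² = ω∧ω to the coordinate hyperplane ℂ³_i = {z_i = 0} equals 2(1−a²)·dx_j∧dy_j∧dx_k∧dy_k. Consequently, for a ≠ ±1 and a ≠ −1/2, the form ω restricts to a nondegenerate form on every coordinate subspace ℂ³_I, I ⊆ {1,2,3}. -/

import Mathlib

set_option synthInstance.maxHeartbeats 1000000
set_option maxHeartbeats 1000000

open ExteriorAlgebra

/-- The real-linear functional `dx_i = Re ∘ z_i` on `ℂ^n`. -/
noncomputable def dxF (n : ℕ) (i : Fin n) : Module.Dual ℝ (Fin n → ℂ) :=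
  Complex.reLm.comp ((LinearMap.proj i : (Fin n → ℂ) →ₗ[ℂ] ℂ).restrictScalars ℝ)

/-- The real-linear functional `dy_i = Im ∘ z_i` on `ℂ^n`. -/
noncomputable def dyF (n : ℕ) (i : Fin n) : Module.Dual ℝ (Fin n → ℂ) :=
  Complex.imLm.comp ((LinearMap.proj i : (Fin n → ℂ) →ₗ[ℂ] ℂ).restrictScalars ℝ)

/-- `dx_i` as a degree-1 element of the exterior algebra of the dual of `ℂ^n`. -/
noncomputable def dxE (n : ℕ) (i : Fin n) :
    ExteriorAlgebra ℝ (Module.Dual ℝ (Fin n → ℂ)) :=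
  ExteriorAlgebra.ι ℝ (dxF n i)

/-- `dy_i` as a degree-1 element of the exterior algebra of the dual of `ℂ^n`. -/
noncomputable def dyE (n : ℕ) (i : Fin n) :
    ExteriorAlgebra ℝ (Module.Dual ℝ (Fin n → ℂ)) :=
  ExteriorAlgebra.ι ℝ (dyF n i)

/-- The coordinate area form `dx_i ∧ dy_i`. -/
noncomputable def dxyE (n : ℕ) (i : Fin n) :
    ExteriorAlgebra ℝ (Module.Dual ℝ (Fin n → ℂ)) :=
  dxE n i * dyE n i

/-- The complex volume form of the coordinate subspace `ℂ^n_I`: the wedge of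
`dx_i ∧ dy_i` over `i ∉ I` (in increasing order). -/
noncomputable def volForm (n : ℕ) (I : Finset (Fin n)) :
    ExteriorAlgebra ℝ (Module.Dual ℝ (Fin n → ℂ)) :=
  (((Iᶜ).sort (· ≤ ·)).map fun i => dxyE n i).prod

/-- The projection of `ℂ^n` onto the coordinate subspace `ℂ^n_I` (setting the
coordinates in `I` to zero). -/
noncomputable def coordProj (n : ℕ) (I : Finset (Fin n)) :
    (Fin n → ℂ) →ₗ[ℝ] (Fin n → ℂ) where
  toFun z := fun i => if i ∈ I then 0 else z i
  map_add' := by intro a b; funext i; by_cases h : i ∈ I <;> simp [h]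
  map_smul' := by intro c a; funext i; by_cases h : i ∈ I <;> simp [h]

/-- Pullback of exterior forms on `ℂ^n` along the projection onto `ℂ^n_I`; this computes
the restriction of a form to the coordinate subspace `ℂ^n_I`. -/
noncomputable def pullbackI (n : ℕ) (I : Finset (Fin n)) :
    ExteriorAlgebra ℝ (Module.Dual ℝ (Fin n → ℂ)) →ₐ[ℝ]
      ExteriorAlgebra ℝ (Module.Dual ℝ (Fin n → ℂ)) :=
  ExteriorAlgebra.map ((coordProj n I).dualMap)

/-- The subspace of genuine (grade-2) alternating 2-forms inside the exterior algebra. -/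
noncomputable def grade2 (n : ℕ) :
    Submodule ℝ (ExteriorAlgebra ℝ (Module.Dual ℝ (Fin n → ℂ))) :=
  LinearMap.range (ExteriorAlgebra.ι ℝ (M := Module.Dual ℝ (Fin n → ℂ))) ^ 2

/-- The 2-form of Example 2.7 of the paper, on `ℂ³ ≅ ℝ⁶`. -/
noncomputable def omegaA (a : ℝ) : ExteriorAlgebra ℝ (Module.Dual ℝ (Fin 3 → ℂ)) :=
  (∑ i : Fin 3, dxyE 3 i)
    + a • (dxE 3 0 * dyE 3 1 - dyE 3 0 * dxE 3 1)
    + a • (dxE 3 0 * dyE 3 2 - dyE 3 0 * dxE 3 2)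
    + a • (dxE 3 1 * dyE 3 2 - dyE 3 1 * dxE 3 2)

namespace Stmt7Aux

variable {M : Type*} [AddCommGroup M] [Module ℝ M]

lemma wswap (u v : M) : ι ℝ v * ι ℝ u = -(ι ℝ u * ι ℝ v) :=
  eq_neg_of_add_eq_zero_left (ι_add_mul_swap v u)

lemma wswap' (u v : M) (c : ExteriorAlgebra ℝ M) :
    ι ℝ v * (ι ℝ u * c) = -(ι ℝ u * (ι ℝ v * c)) := by
  rw [← mul_assoc, wswap, neg_mul, mul_assoc]

lemma wsq' (u : M) (c : ExteriorAlgebra ℝ M) : ι ℝ u * (ι ℝ u * c) = 0 := by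
  rw [← mul_assoc, ι_sq_zero, zero_mul]

lemma sq_eq (a : ℝ) (x2 y2 x3 y3 : M) :
    (ι ℝ x2 * ι ℝ y2 + ι ℝ x3 * ι ℝ y3 + a • (ι ℝ x2 * ι ℝ y3 - ι ℝ y2 * ι ℝ x3)) ^ 2
      = (2 * (1 - a ^ 2)) • (ι ℝ x2 * ι ℝ y2 * (ι ℝ x3 * ι ℝ y3)) := by
  have s1 := wswap x2 y2; have s1' := wswap' x2 y2
  have s2 := wswap x2 x3; have s2' := wswap' x2 x3
  have s3 := wswap x2 y3; have s3' := wswap' x2 y3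
  have s4 := wswap y2 x3; have s4' := wswap' y2 x3
  have s5 := wswap y2 y3; have s5' := wswap' y2 y3
  have s6 := wswap x3 y3; have s6' := wswap' x3 y3
  have q0 := ι_sq_zero (R := ℝ) x2; have q0' := wsq' x2
  have q1 := ι_sq_zero (R := ℝ) y2; have q1' := wsq' y2
  have q2 := ι_sq_zero (R := ℝ) x3; have q2' := wsq' x3
  have q3 := ι_sq_zero (R := ℝ) y3; have q3' := wsq' y3
  simp only [pow_succ, pow_zero, one_mul, mul_add, add_mul, mul_sub, sub_mul,
    smul_mul_assoc, mul_smul_comm, smul_smul, smul_add, smul_sub, smul_neg,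
    mul_neg, neg_mul, neg_neg, mul_assoc,
    s1, s1', s2, s2', s3, s3', s4, s4', s5, s5', s6, s6', q0, q0', q1, q1', q2, q2', q3, q3',
    mul_zero, zero_mul, add_zero, zero_add, smul_zero, neg_zero]
  all_goals module

lemma cube_eq (a : ℝ) (x1 y1 x2 y2 x3 y3 : M) :
    ((ι ℝ x1 * ι ℝ y1 + ι ℝ x2 * ι ℝ y2 + ι ℝ x3 * ι ℝ y3)
      + a • (ι ℝ x1 * ι ℝ y2 - ι ℝ y1 * ι ℝ x2)
      + a • (ι ℝ x1 * ι ℝ y3 - ι ℝ y1 * ι ℝ x3)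
      + a • (ι ℝ x2 * ι ℝ y3 - ι ℝ y2 * ι ℝ x3)) ^ 3
      = (6 * (a - 1) ^ 2 * (2 * a + 1)) •
          (ι ℝ x1 * ι ℝ y1 * (ι ℝ x2 * ι ℝ y2) * (ι ℝ x3 * ι ℝ y3)) := by
  have s1 := wswap x1 y1; have s1' := wswap' x1 y1
  have s2 := wswap x1 x2; have s2' := wswap' x1 x2
  have s3 := wswap x1 y2; have s3' := wswap' x1 y2
  have s4 := wswap x1 x3; have s4' := wswap' x1 x3
  have s5 := wswap x1 y3; have s5' := wswap' x1 y3
  have s6 := wswap y1 x2; have s6' := wswap' y1 x2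
  have s7 := wswap y1 y2; have s7' := wswap' y1 y2
  have s8 := wswap y1 x3; have s8' := wswap' y1 x3
  have s9 := wswap y1 y3; have s9' := wswap' y1 y3
  have s10 := wswap x2 y2; have s10' := wswap' x2 y2
  have s11 := wswap x2 x3; have s11' := wswap' x2 x3
  have s12 := wswap x2 y3; have s12' := wswap' x2 y3
  have s13 := wswap y2 x3; have s13' := wswap' y2 x3
  have s14 := wswap y2 y3; have s14' := wswap' y2 y3
  have s15 := wswap x3 y3; have s15' := wswap' x3 y3
  have q0 := ι_sq_zero (R := ℝ) x1; have q0' := wsq' x1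
  have q1 := ι_sq_zero (R := ℝ) y1; have q1' := wsq' y1
  have q2 := ι_sq_zero (R := ℝ) x2; have q2' := wsq' x2
  have q3 := ι_sq_zero (R := ℝ) y2; have q3' := wsq' y2
  have q4 := ι_sq_zero (R := ℝ) x3; have q4' := wsq' x3
  have q5 := ι_sq_zero (R := ℝ) y3; have q5' := wsq' y3
  simp only [pow_succ, pow_zero, one_mul, mul_add, add_mul, mul_sub, sub_mul,
    smul_mul_assoc, mul_smul_comm, smul_smul, smul_add, smul_sub, smul_neg,
    mul_neg, neg_mul, neg_neg, mul_assoc,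
    s1, s1', s2, s2', s3, s3', s4, s4', s5, s5', s6, s6', s7, s7', s8, s8', s9, s9', s10, s10', s11, s11', s12, s12', s13, s13', s14, s14', s15, s15', q0, q0', q1, q1', q2, q2', q3, q3', q4, q4', q5, q5',
    mul_zero, zero_mul, add_zero, zero_add, smul_zero, neg_zero]
  all_goals module

lemma comm2 (u v w t : M) :
    (ι ℝ u * ι ℝ v) * (ι ℝ w * ι ℝ t) = (ι ℝ w * ι ℝ t) * (ι ℝ u * ι ℝ v) := by
  have s1 := wswap u v; have s1' := wswap' u v
  have s2 := wswap u w; have s2' := wswap' u w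
  have s3 := wswap u t; have s3' := wswap' u t
  have s4 := wswap v w; have s4' := wswap' v w
  have s5 := wswap v t; have s5' := wswap' v t
  have s6 := wswap w t; have s6' := wswap' w t
  have q0 := ι_sq_zero (R := ℝ) u; have q0' := wsq' u
  have q1 := ι_sq_zero (R := ℝ) v; have q1' := wsq' v
  have q2 := ι_sq_zero (R := ℝ) w; have q2' := wsq' w
  have q3 := ι_sq_zero (R := ℝ) t; have q3' := wsq' t
  simp only [pow_succ, pow_zero, one_mul, mul_add, add_mul, mul_sub, sub_mul,
    smul_mul_assoc, mul_smul_comm, smul_smul, smul_add, smul_sub, smul_neg,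
    mul_neg, neg_mul, neg_neg, mul_assoc,
    s1, s1', s2, s2', s3, s3', s4, s4', s5, s5', s6, s6', q0, q0', q1, q1', q2, q2', q3, q3',
    mul_zero, zero_mul, add_zero, zero_add, smul_zero, neg_zero]
  all_goals module


lemma pb_dxE (n : ℕ) (I : Finset (Fin n)) (i : Fin n) :
    pullbackI n I (dxE n i) = if i ∈ I then 0 else dxE n i := by
  rw [pullbackI, dxE, ExteriorAlgebra.map_apply_ι]
  have h : (coordProj n I).dualMap (dxF n i) = if i ∈ I then 0 else dxF n i := by
    ext z
    by_cases h : i ∈ I <;> simp [coordProj, dxF, h]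
  rw [h]
  split <;> simp [dxE]

lemma pb_dyE (n : ℕ) (I : Finset (Fin n)) (i : Fin n) :
    pullbackI n I (dyE n i) = if i ∈ I then 0 else dyE n i := by
  rw [pullbackI, dyE, ExteriorAlgebra.map_apply_ι]
  have h : (coordProj n I).dualMap (dyF n i) = if i ∈ I then 0 else dyF n i := by
    ext z
    by_cases h : i ∈ I <;> simp [coordProj, dyF, h]
  rw [h]
  split <;> simp [dyE]

lemma iM_ne_zero {k : ℕ} (v : Fin k → Module.Dual ℝ (Fin 3 → ℂ)) (c : Fin k → (Fin 3 → ℂ))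
    (h : (Matrix.of fun p q => v p (c q)).det ≠ 0) : ιMulti ℝ k v ≠ 0 := by
  intro h0
  apply h
  set L : Module.Dual ℝ (Fin 3 → ℂ) →ₗ[ℝ] (Fin k → ℝ) :=
    LinearMap.pi (fun q => LinearMap.applyₗ (c q)) with hL
  set A : Module.Dual ℝ (Fin 3 → ℂ) [⋀^Fin k]→ₗ[ℝ] ℝ :=
    (Matrix.detRowAlternating).compLinearMap L with hA
  set F : ∀ i, Module.Dual ℝ (Fin 3 → ℂ) [⋀^Fin i]→ₗ[ℝ] ℝ :=
    Function.update (fun i => 0) k A with hF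
  have h1 := congrArg (liftAlternating F) h0
  rw [liftAlternating_apply_ιMulti, map_zero, hF, Function.update_self, hA] at h1
  rw [AlternatingMap.compLinearMap_apply] at h1
  exact h1

lemma base2 (i : Fin 3) : ι ℝ (dxF 3 i) * ι ℝ (dyF 3 i) ≠ 0 := by
  have h : ι ℝ (dxF 3 i) * ι ℝ (dyF 3 i) = ιMulti ℝ 2 ![dxF 3 i, dyF 3 i] := by
    simp [ιMulti_apply, List.ofFn_succ, mul_assoc]
  rw [h]
  apply iM_ne_zero _ ![Pi.single i 1, Pi.single i Complex.I]
  have h2 : (Matrix.of fun p q => (![dxF 3 i, dyF 3 i] p)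
      (![Pi.single i (1:ℂ), Pi.single i Complex.I] q)) = 1 := by
    ext p q
    fin_cases p <;> fin_cases q <;>
      simp [dxF, dyF, Pi.single_apply, Matrix.one_apply]
  rw [h2, Matrix.det_one]
  norm_num

lemma base4 (j k : Fin 3) (hjk : j ≠ k) :
    ι ℝ (dxF 3 j) * ι ℝ (dyF 3 j) * (ι ℝ (dxF 3 k) * ι ℝ (dyF 3 k)) ≠ 0 := by
  have h : ι ℝ (dxF 3 j) * ι ℝ (dyF 3 j) * (ι ℝ (dxF 3 k) * ι ℝ (dyF 3 k))
      = ιMulti ℝ 4 ![dxF 3 j, dyF 3 j, dxF 3 k, dyF 3 k] := by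
    simp [ιMulti_apply, List.ofFn_succ, mul_assoc]
  rw [h]
  apply iM_ne_zero _ ![Pi.single j 1, Pi.single j Complex.I, Pi.single k 1, Pi.single k Complex.I]
  have h2 : (Matrix.of fun p q => (![dxF 3 j, dyF 3 j, dxF 3 k, dyF 3 k] p)
      (![Pi.single j (1:ℂ), Pi.single j Complex.I, Pi.single k 1, Pi.single k Complex.I] q))
      = 1 := by
    ext p q
    fin_cases p <;> fin_cases q <;>
      simp [dxF, dyF, Pi.single_apply, Matrix.one_apply, hjk, hjk.symm]
  rw [h2, Matrix.det_one]
  norm_num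

lemma base6 :
    ι ℝ (dxF 3 0) * ι ℝ (dyF 3 0) * (ι ℝ (dxF 3 1) * ι ℝ (dyF 3 1))
      * (ι ℝ (dxF 3 2) * ι ℝ (dyF 3 2)) ≠ 0 := by
  have h : ι ℝ (dxF 3 0) * ι ℝ (dyF 3 0) * (ι ℝ (dxF 3 1) * ι ℝ (dyF 3 1))
        * (ι ℝ (dxF 3 2) * ι ℝ (dyF 3 2))
      = ιMulti ℝ 6 ![dxF 3 0, dyF 3 0, dxF 3 1, dyF 3 1, dxF 3 2, dyF 3 2] := by
    simp [ιMulti_apply, List.ofFn_succ, mul_assoc]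
  rw [h]
  apply iM_ne_zero _ ![Pi.single 0 1, Pi.single 0 Complex.I, Pi.single 1 1, Pi.single 1 Complex.I,
    Pi.single 2 1, Pi.single 2 Complex.I]
  have h2 : (Matrix.of fun p q => (![dxF 3 0, dyF 3 0, dxF 3 1, dyF 3 1, dxF 3 2, dyF 3 2] p)
      (![Pi.single 0 (1:ℂ), Pi.single 0 Complex.I, Pi.single 1 1, Pi.single 1 Complex.I,
        Pi.single 2 1, Pi.single 2 Complex.I] q)) = 1 := by
    ext p q
    fin_cases p <;> fin_cases q <;>
      simp [dxF, dyF, Pi.single_apply, Matrix.one_apply, Matrix.cons_val_succ, Fin.isValue,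
        show ((5:Fin 6))=(4:Fin 5).succ from rfl, show ((4:Fin 6))=(3:Fin 5).succ from rfl]
  rw [h2, Matrix.det_one]
  norm_num

lemma dxy_comm (j k : Fin 3) : dxyE 3 j * dxyE 3 k = dxyE 3 k * dxyE 3 j := by
  simp only [dxyE, dxE, dyE]
  exact comm2 _ _ _ _

lemma pb_sq_0 (a : ℝ) :
    pullbackI 3 {0} ((omegaA a) ^ 2) = (2 * (1 - a ^ 2)) • (dxyE 3 1 * dxyE 3 2) := by
  rw [map_pow]
  have h : pullbackI 3 {0} (omegaA a)
      = dxE 3 1 * dyE 3 1 + dxE 3 2 * dyE 3 2 + a • (dxE 3 1 * dyE 3 2 - dyE 3 1 * dxE 3 2) := by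
    simp (config := { decide := true }) [omegaA, dxyE, Fin.sum_univ_three, map_add, map_smul,
      map_sub, map_mul, pb_dxE, pb_dyE]
  rw [h]
  simp only [dxyE, dxE, dyE]
  exact sq_eq a _ _ _ _

lemma pb_sq_1 (a : ℝ) :
    pullbackI 3 {1} ((omegaA a) ^ 2) = (2 * (1 - a ^ 2)) • (dxyE 3 0 * dxyE 3 2) := by
  rw [map_pow]
  have h : pullbackI 3 {1} (omegaA a)
      = dxE 3 0 * dyE 3 0 + dxE 3 2 * dyE 3 2 + a • (dxE 3 0 * dyE 3 2 - dyE 3 0 * dxE 3 2) := by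
    simp (config := { decide := true }) [omegaA, dxyE, Fin.sum_univ_three, map_add, map_smul,
      map_sub, map_mul, pb_dxE, pb_dyE]
  rw [h]
  simp only [dxyE, dxE, dyE]
  exact sq_eq a _ _ _ _

lemma pb_sq_2 (a : ℝ) :
    pullbackI 3 {2} ((omegaA a) ^ 2) = (2 * (1 - a ^ 2)) • (dxyE 3 0 * dxyE 3 1) := by
  rw [map_pow]
  have h : pullbackI 3 {2} (omegaA a)
      = dxE 3 0 * dyE 3 0 + dxE 3 1 * dyE 3 1 + a • (dxE 3 0 * dyE 3 1 - dyE 3 0 * dxE 3 1) := by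
    simp (config := { decide := true }) [omegaA, dxyE, Fin.sum_univ_three, map_add, map_smul,
      map_sub, map_mul, pb_dxE, pb_dyE]
  rw [h]
  simp only [dxyE, dxE, dyE]
  exact sq_eq a _ _ _ _

end Stmt7Aux

open Stmt7Aux in
/-- the restriction of `ω² = ω∧ω` to the coordinate hyperplane `ℂ³_i`
equals `2(1−a²)·dx_j∧dy_j∧dx_k∧dy_k` for `{i,j,k} = {1,2,3}`; consequently, for
`a ≠ ±1, −1/2` the form `ω` restricts to a nondegenerate form (nonzero top power)
on every coordinate subspace `ℂ³_I`. -/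
theorem stmt7 (a : ℝ) :
    (∀ i j k : Fin 3, i ≠ j → i ≠ k → j ≠ k →
      pullbackI 3 {i} ((omegaA a) ^ 2) = (2 * (1 - a ^ 2)) • (dxyE 3 j * dxyE 3 k)) ∧
    (a ≠ 1 → a ≠ -1 → a ≠ -(1 / 2) →
      ∀ I : Finset (Fin 3), pullbackI 3 I (omegaA a) ^ (3 - I.card) ≠ 0) := by
  constructor
  · intro i j k hij hik hjk
    fin_cases i <;> fin_cases j <;> fin_cases k <;>
      first
        | exact absurd rfl hij
        | exact absurd rfl hik
        | exact absurd rfl hjk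
        | exact pb_sq_0 a
        | exact (pb_sq_0 a).trans (congrArg (fun x => (2 * (1 - a ^ 2)) • x) (dxy_comm 1 2))
        | exact pb_sq_1 a
        | exact (pb_sq_1 a).trans (congrArg (fun x => (2 * (1 - a ^ 2)) • x) (dxy_comm 0 2))
        | exact pb_sq_2 a
        | exact (pb_sq_2 a).trans (congrArg (fun x => (2 * (1 - a ^ 2)) • x) (dxy_comm 0 1))
  · intro ha1 ha2 ha3 I
    have hc1 : 2 * (1 - a ^ 2) ≠ 0 := by
      have h1 : (1:ℝ) - a ≠ 0 := sub_ne_zero.2 (Ne.symm ha1)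
      have h2 : (1:ℝ) + a ≠ 0 := by intro h; exact ha2 (by linarith)
      have h3 : (2:ℝ) * (1 - a ^ 2) = 2 * ((1 - a) * (1 + a)) := by ring
      rw [h3]
      exact mul_ne_zero two_ne_zero (mul_ne_zero h1 h2)
    have hc2 : 6 * (a - 1) ^ 2 * (2 * a + 1) ≠ 0 := by
      refine mul_ne_zero (mul_ne_zero (by norm_num) (pow_ne_zero 2 (sub_ne_zero.2 ha1))) ?_
      intro h; exact ha3 (by linarith)
    have hsq : ∀ i : Fin 3, pullbackI 3 {i} ((omegaA a) ^ 2) ≠ 0 := by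
      intro i
      fin_cases i
      · show pullbackI 3 {0} ((omegaA a) ^ 2) ≠ 0
        rw [pb_sq_0 a]
        refine smul_ne_zero hc1 ?_
        simp only [dxyE, dxE, dyE]
        exact base4 1 2 (by decide)
      · show pullbackI 3 {1} ((omegaA a) ^ 2) ≠ 0
        rw [pb_sq_1 a]
        refine smul_ne_zero hc1 ?_
        simp only [dxyE, dxE, dyE]
        exact base4 0 2 (by decide)
      · show pullbackI 3 {2} ((omegaA a) ^ 2) ≠ 0
        rw [pb_sq_2 a]
        refine smul_ne_zero hc1 ?_
        simp only [dxyE, dxE, dyE]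
        exact base4 0 1 (by decide)
    fin_cases I
    · -- I = ∅
      show pullbackI 3 ∅ (omegaA a) ^ 3 ≠ 0
      have h0 : pullbackI 3 ∅ (omegaA a) = omegaA a := by
        simp (config := { decide := true }) [omegaA, dxyE, Fin.sum_univ_three, map_add, map_smul,
          map_sub, map_mul, pb_dxE, pb_dyE]
      rw [h0]
      have h1 : (omegaA a) ^ 3 = (6 * (a - 1) ^ 2 * (2 * a + 1)) •
          (ι ℝ (dxF 3 0) * ι ℝ (dyF 3 0) * (ι ℝ (dxF 3 1) * ι ℝ (dyF 3 1))
            * (ι ℝ (dxF 3 2) * ι ℝ (dyF 3 2))) := by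
        rw [show omegaA a = (ι ℝ (dxF 3 0) * ι ℝ (dyF 3 0) + ι ℝ (dxF 3 1) * ι ℝ (dyF 3 1)
              + ι ℝ (dxF 3 2) * ι ℝ (dyF 3 2))
            + a • (ι ℝ (dxF 3 0) * ι ℝ (dyF 3 1) - ι ℝ (dyF 3 0) * ι ℝ (dxF 3 1))
            + a • (ι ℝ (dxF 3 0) * ι ℝ (dyF 3 2) - ι ℝ (dyF 3 0) * ι ℝ (dxF 3 2))
            + a • (ι ℝ (dxF 3 1) * ι ℝ (dyF 3 2) - ι ℝ (dyF 3 1) * ι ℝ (dxF 3 2)) by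
          simp [omegaA, dxyE, dxE, dyE, Fin.sum_univ_three]]
        exact cube_eq a _ _ _ _ _ _
      rw [h1]
      exact smul_ne_zero hc2 base6
    · -- I = {0}
      show pullbackI 3 {0} (omegaA a) ^ 2 ≠ 0
      rw [← map_pow]
      exact hsq 0
    · -- I = {1}
      show pullbackI 3 {1} (omegaA a) ^ 2 ≠ 0
      rw [← map_pow]
      exact hsq 1
    · -- I = {0,1}
      show pullbackI 3 {0,1} (omegaA a) ^ 1 ≠ 0
      rw [pow_one]
      have h0 : pullbackI 3 {0,1} (omegaA a) = dxE 3 2 * dyE 3 2 := by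
        simp (config := { decide := true }) [omegaA, dxyE, Fin.sum_univ_three,
          map_add, map_smul, map_sub, map_mul, pb_dxE, pb_dyE]
      rw [h0]
      exact base2 2
    · -- I = {2}
      show pullbackI 3 {2} (omegaA a) ^ 2 ≠ 0
      rw [← map_pow]
      exact hsq 2
    · -- I = {0,2}
      show pullbackI 3 {0,2} (omegaA a) ^ 1 ≠ 0
      rw [pow_one]
      have h0 : pullbackI 3 {0,2} (omegaA a) = dxE 3 1 * dyE 3 1 := by
        simp (config := { decide := true }) [omegaA, dxyE, Fin.sum_univ_three,
          map_add, map_smul, map_sub, map_mul, pb_dxE, pb_dyE]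
      rw [h0]
      exact base2 1
    · -- I = {1,2}
      show pullbackI 3 {1,2} (omegaA a) ^ 1 ≠ 0
      rw [pow_one]
      have h0 : pullbackI 3 {1,2} (omegaA a) = dxE 3 0 * dyE 3 0 := by
        simp (config := { decide := true }) [omegaA, dxyE, Fin.sum_univ_three,
          map_add, map_smul, map_sub, map_mul, pb_dxE, pb_dyE]
      rw [h0]
      exact base2 0
    · -- I = {0,1,2}
      show pullbackI 3 {0,1,2} (omegaA a) ^ 0 ≠ 0
      rw [pow_zero]
      exact one_ne_zero
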